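/- Nonlinear error representation with Galerkin orthogonality: Under the hypotheses of the nonlinear error representation (u solves F(u; v) = 0 for all v ∈ V̂, and z ∈ V̂ solves the averaged dual problem tested against a subspace V₀ containing u − u_h), assume additionally that u_h satisfies the discrete problem F(u_h; v) = 0 for all v in a linear subspace V̂_h of V̂. Then for every y ∈ V̂_h (e.g., y an interpolant π_h z of the dual solution), M(u) − M(u_h) = −F(u_h; z − y). -/

import Mathlib

open scoped intervalIntegral

lemma ftc_line_aux {V : Type*} [NormedAddCommGroup V] [NormedSpace ℝ V]
    (f : V → ℝ) (hf : ContDiff ℝ 1 f) (u u_h : V) :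
    (∫ s in (0 : ℝ)..1, fderiv ℝ f (s • u + (1 - s) • u_h) (u - u_h))
      = f u - f u_h := by
  have hγ : ∀ s : ℝ, HasDerivAt (fun t : ℝ => t • u + (1 - t) • u_h) (u - u_h) s := by
    intro s
    have h : HasDerivAt (fun t : ℝ => u_h + t • (u - u_h)) (u - u_h) s := by
      simpa using (((hasDerivAt_id s).smul_const (u - u_h)).const_add u_h)
    convert h using 1
    funext t
    module
  have hd : ∀ s ∈ Set.uIcc (0 : ℝ) 1,
      HasDerivAt (fun t : ℝ => f (t • u + (1 - t) • u_h))
        (fderiv ℝ f (s • u + (1 - s) • u_h) (u - u_h)) s := by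
    intro s _
    exact (((hf.differentiable one_ne_zero) _).hasFDerivAt).comp_hasDerivAt s (hγ s)
  have hγc : Continuous (fun t : ℝ => t • u + (1 - t) • u_h) := by continuity
  have hcont : Continuous fun s : ℝ =>
      fderiv ℝ f (s • u + (1 - s) • u_h) (u - u_h) :=
    ((hf.continuous_fderiv one_ne_zero).comp hγc).clm_apply continuous_const
  have := intervalIntegral.integral_eq_sub_of_hasDerivAt hd (hcont.intervalIntegrable 0 1)
  simpa using this

/-- Nonlinear error representation with Galerkin orthogonality: under the
hypotheses of the nonlinear error representation (`u` solves `F(u; v) = 0` for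
all `v ∈ Vhat`, and `z` solves the averaged dual problem tested against a
subspace `V₀` of `V` containing `u - u_h`), if moreover `u_h` satisfies the
discrete problem `F(u_h; v) = 0` for all `v` in a subspace `Vhat_h` of `Vhat`,
then for every `y ∈ Vhat_h` (e.g. an interpolant `π_h z` of the dual solution),
`M(u) - M(u_h) = -F(u_h; z - y)`. -/
theorem nonlinear_error_representation_galerkin
    (V Vhat : Type*) [NormedAddCommGroup V] [NormedSpace ℝ V]
    [AddCommGroup Vhat] [Module ℝ Vhat]
    (F : V → Vhat →ₗ[ℝ] ℝ) (M : V → ℝ)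
    (hF : ∀ v : Vhat, ContDiff ℝ 1 (fun w => F w v))
    (hM : ContDiff ℝ 1 M)
    (u u_h : V) (z : Vhat) (V₀ : Submodule ℝ V) (Vhat_h : Submodule ℝ Vhat)
    (hprimal : ∀ v : Vhat, F u v = 0)
    (hdiscrete : ∀ v ∈ Vhat_h, F u_h v = 0)
    (hmem : u - u_h ∈ V₀)
    (hdual : ∀ w ∈ V₀,
      (∫ s in (0 : ℝ)..1, fderiv ℝ (fun x => F x z) (s • u + (1 - s) • u_h) w)
        = ∫ s in (0 : ℝ)..1, fderiv ℝ M (s • u + (1 - s) • u_h) w) :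
    ∀ y ∈ Vhat_h, M u - M u_h = -F u_h (z - y) := by
  intro y hy
  have h := hdual (u - u_h) hmem
  rw [ftc_line_aux (fun x => F x z) (hF z) u u_h,
      ftc_line_aux M hM u u_h] at h
  rw [← h, hprimal z, map_sub, hdiscrete y hy]
  ring
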